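/- Let (S, μ) be a measure space with 0 < μ(S) < ∞, let E be a finite-dimensional real inner product space, and let s < t be reals. Suppose Q : S × [s,t] → (symmetric bilinear forms on E) is such that Q(x,τ) is positive definite for all (x,τ), τ ↦ Q(x,τ) is differentiable with derivative Q̇(x,τ), and all the functions appearing below are measurable and integrable. Define N(x,τ) = sup over v ≠ 0 of |Q̇(x,τ)(v,v)| / Q(x,τ)(v,v). Then the average (1/μ(S)) ∫_S sup_{v≠0} |log( Q(x,t)(v,v) / Q(x,s)(v,v) )| dμ(x) is at most √(t−s) · ( (1/μ(S)) ∫_S ∫ₛᵗ N(x,τ)² dτ dμ(x) )^(1/2). -/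

import Mathlib

open MeasureTheory

/-- Diagonal of a bilinear form on a finite-dimensional space is continuous. -/
lemma continuous_bilin_diag {E : Type*} [NormedAddCommGroup E] [NormedSpace ℝ E]
    [FiniteDimensional ℝ E] (B : E →ₗ[ℝ] E →ₗ[ℝ] ℝ) :
    Continuous fun v : E => B v v := by
  let T : E →ₗ[ℝ] (E →L[ℝ] ℝ) :=
    (LinearMap.toContinuousLinearMap : (E →ₗ[ℝ] ℝ) ≃ₗ[ℝ] (E →L[ℝ] ℝ)).toLinearMap.comp B
  have hT : Continuous T := T.continuous_of_finiteDimensional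
  have : Continuous fun v : E => (T v) v :=
    isBoundedBilinearMap_apply.continuous.comp (hT.prodMk continuous_id)
  simpa [T] using this

/-- A scale-invariant function continuous away from zero is bounded on nonzero vectors. -/
lemma bddAbove_range_of_scaleInv {E : Type*} [NormedAddCommGroup E] [NormedSpace ℝ E]
    [FiniteDimensional ℝ E] (f : E → ℝ) (hc : ContinuousOn f {w : E | w ≠ 0})
    (hs : ∀ w : E, w ≠ 0 → f (‖w‖⁻¹ • w) = f w) :
    BddAbove (Set.range fun v : {v : E // v ≠ 0} => f v) := by
  have hK : IsCompact (Metric.sphere (0 : E) 1) := isCompact_sphere 0 1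
  have hsub : Metric.sphere (0 : E) 1 ⊆ {w : E | w ≠ 0} := by
    intro w hw
    simp only [Metric.mem_sphere, dist_zero_right] at hw
    simp only [Set.mem_setOf_eq]
    intro h; rw [h] at hw; simp at hw
  have hbdd : BddAbove (f '' Metric.sphere (0 : E) 1) :=
    hK.bddAbove_image (hc.mono hsub)
  refine hbdd.mono ?_
  rintro y ⟨⟨v, hv⟩, rfl⟩
  have hnv : ‖v‖ ≠ 0 := norm_ne_zero_iff.mpr hv
  refine ⟨‖v‖⁻¹ • v, ?_, hs v hv⟩
  simp [norm_smul, abs_of_nonneg (by positivity : (0:ℝ) ≤ ‖v‖⁻¹), inv_mul_cancel₀ hnv]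

/-- Cauchy–Schwarz: `∫ f ≤ √(ν univ) √(∫ f²)` for nonnegative square-integrable `f`. -/
lemma integral_le_sqrt_measure_mul_sqrt {α : Type*} [MeasurableSpace α] (ν : Measure α)
    [IsFiniteMeasure ν] (f : α → ℝ) (hf : AEStronglyMeasurable f ν)
    (hnn : ∀ x, 0 ≤ f x) (hint : Integrable (fun x => f x ^ 2) ν) :
    ∫ x, f x ∂ν ≤ Real.sqrt (ν Set.univ).toReal * Real.sqrt (∫ x, f x ^ 2 ∂ν) := by
  have hpq : Real.HolderConjugate 2 2 := (Real.holderConjugate_iff_eq_conjExponent one_lt_two).mpr (by norm_num)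
  have hmem : MemLp f 2 ν := (memLp_two_iff_integrable_sq hf).mpr hint
  have hone : MemLp (fun _ : α => (1:ℝ)) 2 ν := memLp_const 1
  have h := integral_mul_le_Lp_mul_Lq_of_nonneg hpq
    (Filter.Eventually.of_forall hnn) (Filter.Eventually.of_forall fun _ => zero_le_one)
    (by simpa using hmem) (by simpa using hone)
  have h2 : ∀ a : ℝ, a ^ (2:ℝ) = a ^ (2:ℕ) := fun a => by
    rw [show ((2:ℝ)) = ((2:ℕ):ℝ) by norm_num, Real.rpow_natCast]
  simp only [mul_one, one_pow, h2] at h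
  calc ∫ x, f x ∂ν ≤ (∫ x, f x ^ 2 ∂ν) ^ ((1:ℝ)/2) * (∫ _x, (1:ℝ) ∂ν) ^ ((1:ℝ)/2) := by
        simpa using h
    _ = Real.sqrt (ν Set.univ).toReal * Real.sqrt (∫ x, f x ^ 2 ∂ν) := by
        rw [integral_const, smul_eq_mul, mul_one, ← Real.sqrt_eq_rpow, ← Real.sqrt_eq_rpow,
          mul_comm, measureReal_def]

theorem avg_log_distortion_le {S : Type*} [MeasurableSpace S] (μ : Measure S)
    (hμ_pos : 0 < μ Set.univ) (hμ_fin : μ Set.univ < ⊤)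
    {E : Type*} [NormedAddCommGroup E] [InnerProductSpace ℝ E]
    [FiniteDimensional ℝ E]
    (s t : ℝ) (hst : s < t)
    (Q Q' : S → ℝ → E →ₗ[ℝ] E →ₗ[ℝ] ℝ)
    (hQ_symm : ∀ x τ v w, Q x τ v w = Q x τ w v)
    (hQ_posdef : ∀ x τ (v : E), v ≠ 0 → 0 < Q x τ v v)
    (hQ_deriv : ∀ x (v w : E) τ, τ ∈ Set.Icc s t →
      HasDerivAt (fun σ => Q x σ v w) (Q' x τ v w) τ)
    (N : S → ℝ → ℝ)
    (hN : ∀ x τ, N x τ = ⨆ v : {v : E // v ≠ 0}, |Q' x τ v v| / Q x τ v v)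
    (L : S → ℝ)
    (hL : ∀ x, L x = ⨆ v : {v : E // v ≠ 0}, |Real.log (Q x t v v / Q x s v v)|)
    (hL_meas : Integrable L μ)
    (hN_int : ∀ x, IntervalIntegrable (fun τ => (N x τ) ^ 2) volume s t)
    (hN_int_meas : Integrable (fun x => ∫ τ in s..t, (N x τ) ^ 2) μ) :
    (1 / (μ Set.univ).toReal) * ∫ x, L x ∂μ ≤
      Real.sqrt (t - s) *
        ((1 / (μ Set.univ).toReal) *
          ∫ x, (∫ τ in s..t, (N x τ) ^ 2) ∂μ) ^ ((1 : ℝ) / 2) := by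
  haveI : IsFiniteMeasure μ := ⟨hμ_fin⟩
  set m := (μ Set.univ).toReal with hm_def
  have hm : 0 < m := ENNReal.toReal_pos hμ_pos.ne' hμ_fin.ne
  set A : S → ℝ := fun x => ∫ τ in s..t, (N x τ) ^ 2 with hA_def
  have hA_nonneg : ∀ x, 0 ≤ A x := fun x =>
    intervalIntegral.integral_nonneg hst.le (fun τ _ => sq_nonneg _)
  haveI : IsFiniteMeasure (volume.restrict (Set.Ioc s t)) := ⟨by
    rw [Measure.restrict_apply_univ]; exact measure_Ioc_lt_top⟩
  have hmeas_univ : ((volume.restrict (Set.Ioc s t)) Set.univ).toReal = t - s := by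
    rw [Measure.restrict_apply_univ, Real.volume_Ioc, ENNReal.toReal_ofReal (by linarith)]
  -- pointwise (in x) bound
  have key : ∀ x, L x ≤ Real.sqrt (t - s) * Real.sqrt (A x) := by
    intro x
    rw [hL]
    refine Real.iSup_le ?_ (by positivity)
    rintro ⟨v, hv⟩
    have hg_pos : ∀ τ, 0 < Q x τ v v := fun τ => hQ_posdef x τ v hv
    set φ : ℝ → ℝ := fun τ => Real.log (Q x τ v v) with hφ_def
    have hφ : ∀ τ ∈ Set.Icc s t, HasDerivAt φ (Q' x τ v v / Q x τ v v) τ := fun τ hτ =>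
      (hQ_deriv x v v τ hτ).log (hg_pos τ).ne'
    set D : ℝ → ℝ := fun τ => deriv φ τ with hD_def
    have hD_eq : ∀ τ ∈ Set.Icc s t, D τ = Q' x τ v v / Q x τ v v := fun τ hτ => (hφ τ hτ).deriv
    have hD_meas : Measurable D := measurable_deriv φ
    have hD_le : ∀ τ ∈ Set.Icc s t, |D τ| ≤ N x τ := by
      intro τ hτ
      rw [hD_eq τ hτ, hN, abs_div, abs_of_pos (hg_pos τ)]
      have hbdd : BddAbove (Set.range fun w : {w : E // w ≠ 0} =>
          |Q' x τ w w| / Q x τ w w) := by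
        refine bddAbove_range_of_scaleInv (fun w => |Q' x τ w w| / Q x τ w w) ?_ ?_
        · apply ContinuousOn.div
          · exact (continuous_bilin_diag (Q' x τ)).abs.continuousOn
          · exact (continuous_bilin_diag (Q x τ)).continuousOn
          · intro w hw; exact (hQ_posdef x τ w hw).ne'
        · intro w hw
          have h1 : ∀ (B : E →ₗ[ℝ] E →ₗ[ℝ] ℝ),
              B (‖w‖⁻¹ • w) (‖w‖⁻¹ • w) = ‖w‖⁻¹ ^ 2 * B w w := by
            intro B; simp only [LinearMap.map_smul, LinearMap.smul_apply, smul_eq_mul]; ring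
          have hnw : (0:ℝ) < ‖w‖⁻¹ ^ 2 := by
            have : (0:ℝ) < ‖w‖ := norm_pos_iff.mpr hw
            positivity
          simp only [h1, abs_mul, abs_of_pos hnw]
          rw [mul_div_mul_left _ _ hnw.ne']
      exact le_ciSup hbdd ⟨v, hv⟩
    have hN2_int : IntegrableOn (fun τ => (N x τ) ^ 2) (Set.Ioc s t) volume := (hN_int x).1
    have hbound_int : IntegrableOn (fun τ => 1 + (N x τ) ^ 2) (Set.Ioc s t) volume :=
      (integrableOn_const measure_Ioc_lt_top.ne).add hN2_int
    have hD_intOn : IntegrableOn D (Set.Ioc s t) volume := by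
      refine Integrable.mono hbound_int hD_meas.aestronglyMeasurable.restrict ?_
      filter_upwards [ae_restrict_mem measurableSet_Ioc] with τ hτ
      have h := hD_le τ (Set.Ioc_subset_Icc_self hτ)
      have h0 : (0:ℝ) ≤ 1 + (N x τ) ^ 2 := by nlinarith [abs_nonneg (D τ)]
      rw [Real.norm_eq_abs, Real.norm_eq_abs, abs_of_nonneg h0]
      nlinarith [abs_nonneg (D τ)]
    have hD_int : IntervalIntegrable D volume s t :=
      (intervalIntegrable_iff_integrableOn_Ioc_of_le hst.le).mpr hD_intOn
    have huIcc : Set.uIcc s t = Set.Icc s t := Set.uIcc_of_le hst.le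
    have hftc : ∫ τ in s..t, D τ = φ t - φ s := by
      refine intervalIntegral.integral_eq_sub_of_hasDerivAt (fun τ hτ => ?_) hD_int
      rw [huIcc] at hτ
      rw [hD_eq τ hτ]; exact hφ τ hτ
    have hDabs_int : Integrable (fun τ => |D τ|) (volume.restrict (Set.Ioc s t)) :=
      hD_intOn.abs
    have hD2_int : Integrable (fun τ => |D τ| ^ 2) (volume.restrict (Set.Ioc s t)) := by
      refine Integrable.mono hN2_int (hD_meas.abs.pow_const 2).aestronglyMeasurable.restrict ?_
      filter_upwards [ae_restrict_mem measurableSet_Ioc] with τ hτ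
      have h := hD_le τ (Set.Ioc_subset_Icc_self hτ)
      have h0 : (0:ℝ) ≤ |D τ| := abs_nonneg _
      rw [Real.norm_eq_abs, Real.norm_eq_abs, abs_of_nonneg (by positivity : (0:ℝ) ≤ |D τ| ^ 2)]
      have : |D τ| ^ 2 ≤ (N x τ) ^ 2 := by nlinarith
      calc |D τ| ^ 2 ≤ (N x τ) ^ 2 := this
        _ ≤ |(N x τ) ^ 2| := le_abs_self _
    have hcs := integral_le_sqrt_measure_mul_sqrt (volume.restrict (Set.Ioc s t))
      (fun τ => |D τ|) hD_meas.abs.aestronglyMeasurable.restrict (fun τ => abs_nonneg _) hD2_int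
    rw [hmeas_univ] at hcs
    have h4 : ∫ τ, |D τ| ^ 2 ∂(volume.restrict (Set.Ioc s t)) ≤
        ∫ τ, (N x τ) ^ 2 ∂(volume.restrict (Set.Ioc s t)) := by
      refine integral_mono_ae hD2_int hN2_int ?_
      filter_upwards [ae_restrict_mem measurableSet_Ioc] with τ hτ
      have h := hD_le τ (Set.Ioc_subset_Icc_self hτ)
      nlinarith [abs_nonneg (D τ)]
    have hA_eq : A x = ∫ τ, (N x τ) ^ 2 ∂(volume.restrict (Set.Ioc s t)) :=
      intervalIntegral.integral_of_le hst.le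
    calc |Real.log (Q x t v v / Q x s v v)| = |φ t - φ s| := by
          rw [Real.log_div (hg_pos t).ne' (hg_pos s).ne']
      _ = |∫ τ in s..t, D τ| := by rw [hftc]
      _ ≤ ∫ τ in s..t, |D τ| := intervalIntegral.abs_integral_le_integral_abs hst.le
      _ = ∫ τ, |D τ| ∂(volume.restrict (Set.Ioc s t)) := intervalIntegral.integral_of_le hst.le
      _ ≤ Real.sqrt (t - s) * Real.sqrt (∫ τ, |D τ| ^ 2 ∂(volume.restrict (Set.Ioc s t))) := hcs
      _ ≤ Real.sqrt (t - s) * Real.sqrt (A x) := by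
          rw [hA_eq]
          exact mul_le_mul_of_nonneg_left (Real.sqrt_le_sqrt h4) (Real.sqrt_nonneg _)
  -- integrability of the majorant
  have hA_meas : AEStronglyMeasurable A μ := hN_int_meas.1
  have hsqrtA_meas : AEStronglyMeasurable (fun x => Real.sqrt (A x)) μ :=
    Real.continuous_sqrt.comp_aestronglyMeasurable hA_meas
  have hsqrtA_int : Integrable (fun x => Real.sqrt (A x)) μ := by
    refine Integrable.mono ((integrable_const (1:ℝ)).add hN_int_meas) hsqrtA_meas ?_
    refine Filter.Eventually.of_forall fun x => ?_
    have h0 := hA_nonneg x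
    have hss := Real.sq_sqrt h0
    have hsn := Real.sqrt_nonneg (A x)
    simp only [Pi.add_apply, Real.norm_eq_abs]
    rw [abs_of_nonneg hsn, abs_of_nonneg (by linarith : (0:ℝ) ≤ 1 + A x)]
    nlinarith
  have hR_int : Integrable (fun x => Real.sqrt (t - s) * Real.sqrt (A x)) μ :=
    hsqrtA_int.const_mul _
  have hintL : ∫ x, L x ∂μ ≤ ∫ x, Real.sqrt (t - s) * Real.sqrt (A x) ∂μ :=
    integral_mono hL_meas hR_int key
  have hA2 : Integrable (fun x => (Real.sqrt (A x)) ^ 2) μ :=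
    hN_int_meas.congr (Filter.Eventually.of_forall fun x => (Real.sq_sqrt (hA_nonneg x)).symm)
  have hcs2 := integral_le_sqrt_measure_mul_sqrt μ (fun x => Real.sqrt (A x))
    hsqrtA_meas (fun _ => Real.sqrt_nonneg _) hA2
  have hAint_eq : ∫ x, (Real.sqrt (A x)) ^ 2 ∂μ = ∫ x, A x ∂μ :=
    integral_congr_ae (Filter.Eventually.of_forall fun x => Real.sq_sqrt (hA_nonneg x))
  rw [hAint_eq] at hcs2
  set IA := ∫ x, A x ∂μ with hIA_def
  have hIA_nonneg : 0 ≤ IA := integral_nonneg hA_nonneg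
  have hsplit : ∫ x, Real.sqrt (t - s) * Real.sqrt (A x) ∂μ =
      Real.sqrt (t - s) * ∫ x, Real.sqrt (A x) ∂μ := integral_const_mul _ _
  have hsm : Real.sqrt m * Real.sqrt m = m := Real.mul_self_sqrt hm.le
  have hsm_pos : 0 < Real.sqrt m := Real.sqrt_pos.mpr hm
  calc (1 / m) * ∫ x, L x ∂μ
      ≤ (1 / m) * (Real.sqrt (t - s) * (Real.sqrt m * Real.sqrt IA)) := by
        refine mul_le_mul_of_nonneg_left ?_ (by positivity)
        calc ∫ x, L x ∂μ ≤ ∫ x, Real.sqrt (t - s) * Real.sqrt (A x) ∂μ := hintL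
          _ = Real.sqrt (t - s) * ∫ x, Real.sqrt (A x) ∂μ := hsplit
          _ ≤ Real.sqrt (t - s) * (Real.sqrt m * Real.sqrt IA) :=
            mul_le_mul_of_nonneg_left hcs2 (Real.sqrt_nonneg _)
    _ = Real.sqrt (t - s) * ((1 / m) * IA) ^ ((1:ℝ) / 2) := by
        rw [← Real.sqrt_eq_rpow, Real.sqrt_mul (by positivity : (0:ℝ) ≤ 1 / m),
          one_div m, Real.sqrt_inv]
        field_simp
        linear_combination Real.sqrt (t - s) * Real.sqrt IA * hsm
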